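/- Let G be a finite connected multigraph with first Betti number β and with |V¹| vertices of degree one, and let P be an exhaustive k-partition of G whose minimal cut has rank k - 1 + r with 0 ≤ r ≤ β. Then at most β + |V¹| - r clusters of P can be 'malign', i.e., contain a degree-one vertex of G or a cycle of G. -/

import Mathlib

/-- A finite multigraph presented by its set of edge-endpoints (darts): `inv` pairs
the two endpoints of each edge; the vertex set is a partition (setoid) of the darts. -/
structure PMultigraph where
  D : Type
  [fintypeD : Fintype D]
  inv : D → D
  inv_invol : ∀ x, inv (inv x) = x
  inv_ne : ∀ x, inv x ≠ x

attribute [instance] PMultigraph.fintypeD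

namespace PMultigraph

variable (G : PMultigraph)

/-- One step of connectivity for the graph with vertex partition `V`:
two darts are adjacent if they lie at the same vertex or are the two ends of one edge. -/
def step (V : Setoid G.D) (x y : G.D) : Prop := V.r x y ∨ y = G.inv x

/-- Reachability in the graph with vertex partition `V`. -/
def reach (V : Setoid G.D) : G.D → G.D → Prop := Relation.ReflTransGen (G.step V)

/-- The graph with vertex partition `V` is connected. -/
def Conn (V : Setoid G.D) : Prop := ∀ x y, G.reach V x y

/-- Number of vertices. -/
noncomputable def nVert (V : Setoid G.D) : ℕ := Nat.card (Quotient V)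

/-- Number of edges. -/
noncomputable def nEdge : ℕ := Fintype.card G.D / 2

/-- First Betti number `|E| - |V| + 1` (as an integer). -/
noncomputable def betti (V : Setoid G.D) : ℤ := (G.nEdge : ℤ) - G.nVert V + 1

/-- Number of connected components of the graph with vertex partition `V`. -/
noncomputable def ncomp (V : Setoid G.D) : ℕ := Nat.card (Quot (G.reach V))

end PMultigraph

namespace PMultigraph

variable (G : PMultigraph)

/-- The set of darts of a connected component `c` of the cut graph. -/
def compSet (V' : Setoid G.D) (c : Quot (G.reach V')) : Set G.D :=
  {x | Quot.mk (G.reach V') x = c}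

/-- A cluster (connected component of the cut graph given by `V'`) is malign if it
contains a degree-one vertex of the original graph (a singleton `V`-class) or a
cycle of the graph (its number of edges is at least its number of vertices). -/
def Malign (V V' : Setoid G.D) (c : Quot (G.reach V')) : Prop :=
  (∃ x ∈ G.compSet V' c, ∀ y, V.r y x → y = x) ∨
    (G.compSet V' c).ncard / 2 ≥ ((fun x => Quotient.mk V' x) '' G.compSet V' c).ncard

/-- Number of degree-one vertices (singleton classes) of the graph with vertex
partition `V`. -/
noncomputable def nLeaves (V : Setoid G.D) : ℕ :=
  Nat.card {v : Quotient V // ∀ p q : G.D, Quotient.mk V p = v → Quotient.mk V q = v → p = q}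

end PMultigraph

namespace PMultigraph

variable (G : PMultigraph)

lemma step_symm (V' : Setoid G.D) : Symmetric (G.step V') := by
  intro x y h
  rcases h with h | h
  · exact Or.inl (V'.symm h)
  · right; rw [h, G.inv_invol]

lemma reach_equiv (V' : Setoid G.D) : Equivalence (G.reach V') :=
  ⟨fun _ => Relation.ReflTransGen.refl,
   fun h => (@Relation.ReflTransGen.stdSymm _ (G.step V') ⟨fun _ _ h => G.step_symm V' h⟩).symm _ _ h,
   fun h1 h2 => Relation.ReflTransGen.trans h1 h2⟩

lemma quot_mk_eq_iff (V' : Setoid G.D) {x y : G.D} :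
    Quot.mk (G.reach V') x = Quot.mk (G.reach V') y ↔ G.reach V' x y := by
  rw [Quot.eq]
  exact (G.reach_equiv V').eqvGen_iff

def reachN (V' : Setoid G.D) : ℕ → G.D → G.D → Prop
  | 0, x, y => y = x
  | n + 1, x, y => ∃ z, reachN V' n x z ∧ G.step V' z y

lemma reach_iff_reachN (V' : Setoid G.D) {x y : G.D} :
    G.reach V' x y ↔ ∃ n, G.reachN V' n x y := by
  constructor
  · intro h
    induction h with
    | refl => exact ⟨0, rfl⟩
    | tail _ hstep ih =>
      obtain ⟨n, hn⟩ := ih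
      exact ⟨n + 1, _, hn, hstep⟩
  · rintro ⟨n, hn⟩
    induction n generalizing y with
    | zero => cases hn; exact Relation.ReflTransGen.refl
    | succ n ih =>
      obtain ⟨z, hz, hstep⟩ := hn
      exact Relation.ReflTransGen.tail (ih hz) hstep


lemma inv_mem_compSet (V' : Setoid G.D) (c : Quot (G.reach V')) {x : G.D}
    (hx : x ∈ G.compSet V' c) : G.inv x ∈ G.compSet V' c := by
  have h : G.reach V' (G.inv x) x := Relation.ReflTransGen.single (Or.inr (G.inv_invol x).symm)
  show Quot.mk _ _ = c
  rw [(G.quot_mk_eq_iff V').mpr h]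
  exact hx

lemma comp_bound (V' : Setoid G.D) (c : Quot (G.reach V')) :
    2 * ((fun x => Quotient.mk V' x) '' G.compSet V' c).ncard ≤ (G.compSet V' c).ncard + 2 := by
  classical
  by_cases hne : (G.compSet V' c).Nonempty
  · obtain ⟨x0, hx0⟩ := hne
    set C := G.compSet V' c with hC
    set T := (fun x => Quotient.mk V' x) '' C with hT
    set q0 : Quotient V' := Quotient.mk V' x0 with hq0
    set d : Quotient V' → ℕ :=
      fun q => sInf {n | ∃ z, G.reachN V' n x0 z ∧ Quotient.mk V' z = q} with hd
    have hmemC : ∀ z, G.reach V' x0 z → z ∈ C := by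
      intro z hz
      show Quot.mk _ _ = c
      rw [(G.quot_mk_eq_iff V').mpr ((G.reach_equiv V').symm hz)]
      exact hx0
    have key : ∀ q ∈ T \ {q0}, ∃ z, Quotient.mk V' z = q ∧ z ∈ C ∧
        d (Quotient.mk V' (G.inv z)) < d q := by
      rintro q ⟨⟨w, hwC, hwq⟩, hqne⟩
      have hqne : q ≠ q0 := hqne
      have hSne : {n | ∃ z, G.reachN V' n x0 z ∧ Quotient.mk V' z = q}.Nonempty := by
        have hr : G.reach V' x0 w := by
          rw [← G.quot_mk_eq_iff V']
          exact hx0.trans hwC.symm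
        obtain ⟨n, hn⟩ := (G.reach_iff_reachN V').mp hr
        exact ⟨n, w, hn, hwq⟩
      have hmem : d q ∈ {n | ∃ z, G.reachN V' n x0 z ∧ Quotient.mk V' z = q} :=
        Nat.sInf_mem hSne
      obtain ⟨z, hz, hzq⟩ := hmem
      have hd0 : d q ≠ 0 := by
        intro h0
        rw [h0] at hz
        exact hqne (hzq ▸ (hz ▸ rfl : Quotient.mk V' z = q0))
      obtain ⟨m, hm⟩ := Nat.exists_eq_succ_of_ne_zero hd0
      rw [hm] at hz
      obtain ⟨y, hy, hstep⟩ := hz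
      have hyq : Quotient.mk V' y ≠ q := by
        intro h
        have : d q ≤ m := Nat.sInf_le ⟨y, hy, h⟩
        omega
      rcases hstep with hstep | hstep
      · exact absurd (hzq ▸ Quotient.sound hstep) hyq
      · refine ⟨z, hzq, ?_, ?_⟩
        · exact hmemC z ((G.reach_iff_reachN V').mpr ⟨d q, hm ▸ ⟨y, hy, Or.inr hstep⟩⟩)
        · have hinvz : G.inv z = y := by rw [hstep, G.inv_invol]
          rw [hinvz]
          have : d (Quotient.mk V' y) ≤ m := Nat.sInf_le ⟨y, hy, rfl⟩
          omega
    choose zf hz1 hz2 hz3 using key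
    have hedge : ∀ q hq q' hq', zf q hq = G.inv (zf q' hq') → False := by
      intro q hq q' hq' h
      have h1 : d q < d q' := by
        have := hz3 q' hq'
        rwa [← h, hz1 q hq] at this
      have h2 : d q' < d q := by
        have h' : G.inv (zf q hq) = zf q' hq' := by rw [h, G.inv_invol]
        have := hz3 q hq
        rwa [h', hz1 q' hq'] at this
      omega
    set φ : (↥(T \ {q0})) × Bool → ↥C := fun p =>
      if p.2 then ⟨zf p.1.1 p.1.2, hz2 p.1.1 p.1.2⟩
      else ⟨G.inv (zf p.1.1 p.1.2), G.inv_mem_compSet V' c (hz2 p.1.1 p.1.2)⟩ with hφ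
    have hinjz : ∀ q hq q' hq', zf q hq = zf q' hq' → q = q' := by
      intro q hq q' hq' h
      rw [← hz1 q hq, ← hz1 q' hq', h]
    have hinj : Function.Injective φ := by
      rintro ⟨⟨q, hq⟩, b⟩ ⟨⟨q', hq'⟩, b'⟩ h
      rcases b <;> rcases b' <;>
        simp only [hφ, if_true, if_false, Bool.false_eq_true, Subtype.mk.injEq] at h
      · have h3 := congrArg G.inv h
        rw [G.inv_invol, G.inv_invol] at h3
        have : q = q' := hinjz q _ q' _ h3
        subst this; rfl
      · exact (hedge q' _ q _ h.symm).elim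
      · exact (hedge q _ q' _ h).elim
      · have : q = q' := hinjz q _ q' _ h
        subst this; rfl
    have hcard : Nat.card ((↥(T \ {q0})) × Bool) ≤ Nat.card ↥C :=
      Nat.card_le_card_of_injective φ hinj
    have hcard1 : Nat.card ((↥(T \ {q0})) × Bool) = (T \ {q0}).ncard * 2 := by
      rw [Nat.card_prod, Nat.card_coe_set_eq, Nat.card_eq_fintype_card, Fintype.card_bool]
    have hcard2 : Nat.card ↥C = C.ncard := Nat.card_coe_set_eq C
    have hq0T : q0 ∈ T := ⟨x0, hx0, rfl⟩
    have hTfin : T.Finite := Set.toFinite T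
    have hdiff : (T \ {q0}).ncard + 1 = T.ncard := Set.ncard_diff_singleton_add_one hq0T hTfin
    rw [hcard1, hcard2] at hcard
    omega
  · rw [Set.not_nonempty_iff_eq_empty.mp hne]
    simp


lemma even_card_aux {α : Type} [DecidableEq α] (f : α → α)
    (hinv : ∀ x, f (f x) = x) (hne : ∀ x, f x ≠ x) :
    ∀ s : Finset α, (∀ x ∈ s, f x ∈ s) → Even s.card := by
  intro s
  induction s using Finset.strongInduction with
  | _ s ih =>
    intro hcl
    rcases s.eq_empty_or_nonempty with rfl | ⟨x, hx⟩
    · simp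
    · have hfx : f x ∈ s := hcl x hx
      have hsub : ({x, f x} : Finset α) ⊆ s := by
        intro y hy
        rcases Finset.mem_insert.mp hy with rfl | hy
        · exact hx
        · rw [Finset.mem_singleton.mp hy]; exact hfx
      have hlt : s \ {x, f x} ⊂ s := by
        apply Finset.sdiff_ssubset hsub
        exact ⟨x, Finset.mem_insert_self _ _⟩
      have hcl' : ∀ y ∈ s \ {x, f x}, f y ∈ s \ {x, f x} := by
        intro y hy
        rw [Finset.mem_sdiff] at hy ⊢
        refine ⟨hcl y hy.1, ?_⟩
        intro hmem
        rcases Finset.mem_insert.mp hmem with h | h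
        · apply hy.2
          rw [Finset.mem_insert]
          right
          rw [Finset.mem_singleton, ← h, hinv]
        · apply hy.2
          rw [Finset.mem_insert]
          left
          have h2 := congrArg f (Finset.mem_singleton.mp h)
          rwa [hinv, hinv] at h2
      obtain ⟨m, hm⟩ := ih _ hlt hcl'
      have hc2 : ({x, f x} : Finset α).card = 2 := by
        rw [Finset.card_insert_of_notMem (by simp [Ne.symm (hne x)]), Finset.card_singleton]
      have := Finset.card_sdiff_add_card_eq_card hsub
      exact ⟨m + 1, by omega⟩

lemma even_ncard_closed (S : Set G.D) (hcl : ∀ x ∈ S, G.inv x ∈ S) :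
    Even S.ncard := by
  classical
  rw [Set.ncard_eq_toFinset_card' S]
  apply even_card_aux G.inv G.inv_invol G.inv_ne
  intro x hxx
  rw [Set.mem_toFinset] at hxx ⊢
  exact hcl x hxx


end PMultigraph

/-- An exhaustive `k`-partition of rank `k - 1 + r` (with `0 ≤ r ≤ β`) has at most
`β + |V¹| - r` malign clusters. -/
theorem malign_count_le (G : PMultigraph) [Nonempty G.D]
    (V V' : Setoid G.D) (hconn : G.Conn V) (hcut : ∀ x y, V'.r x y → V.r x y)
    (k r : ℕ) (hk : 1 ≤ k) (hcomp : G.ncomp V' = k)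
    (hrank : (G.nVert V' : ℤ) = (G.nVert V : ℤ) + ((k : ℤ) - 1 + r))
    (hr : (r : ℤ) ≤ G.betti V) :
    (Nat.card {c : Quot (G.reach V') // G.Malign V V' c} : ℤ) ≤
      G.betti V + G.nLeaves V - r := by
  classical
  have hfinQ : Finite (Quot (G.reach V')) :=
    Finite.of_surjective (Quot.mk (G.reach V')) Quot.mk_surjective
  have hfinV' : Finite (Quotient V') :=
    Finite.of_surjective (Quotient.mk V') Quot.mk_surjective
  have hfinV : Finite (Quotient V) :=
    Finite.of_surjective (Quotient.mk V) Quot.mk_surjective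
  have instQ : Fintype (Quot (G.reach V')) := Fintype.ofFinite _
  have instV' : Fintype (Quotient V') := Fintype.ofFinite _
  -- per-component quantities
  set n : Quot (G.reach V') → ℕ := fun c => (G.compSet V' c).ncard with hn
  set v : Quot (G.reach V') → ℕ :=
    fun c => ((fun x => Quotient.mk V' x) '' G.compSet V' c).ncard with hv
  have hbound : ∀ c, 2 * v c ≤ n c + 2 := fun c => G.comp_bound V' c
  have heven : ∀ c, Even (n c) := by
    intro c
    exact G.even_ncard_closed (G.compSet V' c) (fun x hx => G.inv_mem_compSet V' c hx)
  -- sum of n c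
  have hfib1 : ∀ c, n c = (Finset.univ.filter fun a => Quot.mk (G.reach V') a = c).card := by
    intro c
    show (G.compSet V' c).ncard = _
    rw [show G.compSet V' c = ↑(Finset.univ.filter fun a => Quot.mk (G.reach V') a = c) by
      ext x; simp [PMultigraph.compSet], Set.ncard_coe_finset]
  have hsum1 : Fintype.card G.D = ∑ c, n c := by
    rw [← Finset.card_univ]
    rw [Finset.card_eq_sum_card_fiberwise (f := fun a => Quot.mk (G.reach V') a)
      (t := Finset.univ) (fun x _ => Finset.mem_univ _)]
    exact Finset.sum_congr rfl (fun c _ => (hfib1 c).symm)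
  -- sum of v c
  set f2 : Quotient V' → Quot (G.reach V') :=
    Quotient.lift (Quot.mk (G.reach V'))
      (fun a b hab => Quot.sound (Relation.ReflTransGen.single (Or.inl hab))) with hf2
  have hfib2 : ∀ c, v c = (Finset.univ.filter fun q => f2 q = c).card := by
    intro c
    show ((fun x => Quotient.mk V' x) '' G.compSet V' c).ncard = _
    rw [show ((fun x => Quotient.mk V' x) '' G.compSet V' c)
        = ↑(Finset.univ.filter fun q => f2 q = c) from ?_, Set.ncard_coe_finset]
    ext q
    induction q using Quotient.ind with
    | _ a =>
      simp only [Set.mem_image, Finset.coe_filter, Finset.mem_univ, true_and,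
        Set.mem_setOf_eq, PMultigraph.compSet, hf2, Quotient.lift_mk]
      constructor
      · rintro ⟨x, hx, hxa⟩
        have : G.reach V' x a := Relation.ReflTransGen.single (Or.inl (Quotient.exact hxa))
        rw [← (G.quot_mk_eq_iff V').mpr this]
        exact hx
      · intro h
        exact ⟨a, h, rfl⟩
  have hsum2 : Fintype.card (Quotient V') = ∑ c, v c := by
    rw [← Finset.card_univ]
    rw [Finset.card_eq_sum_card_fiberwise (f := f2) (t := Finset.univ)
      (fun x _ => Finset.mem_univ _)]
    exact Finset.sum_congr rfl (fun c _ => (hfib2 c).symm)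
  -- global counts
  have hkQ : Fintype.card (Quot (G.reach V')) = k := by
    rw [← Nat.card_eq_fintype_card]
    exact hcomp
  have hVert' : G.nVert V' = Fintype.card (Quotient V') := Nat.card_eq_fintype_card
  have hED : 2 * G.nEdge = Fintype.card G.D := by
    have hev : Even (Fintype.card G.D) := by
      have h := G.even_ncard_closed Set.univ (fun x _ => Set.mem_univ _)
      rwa [Set.ncard_univ, Nat.card_eq_fintype_card] at h
    rw [PMultigraph.nEdge]
    exact Nat.two_mul_div_two_of_even hev
  -- the total excess
  have hnonneg : ∀ c, (0 : ℤ) ≤ (n c : ℤ) + 2 - 2 * v c := by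
    intro c
    have := hbound c
    push_cast
    omega
  have htotal : ∑ c, ((n c : ℤ) + 2 - 2 * v c) = 2 * (G.betti V - r) := by
    have e1 : ∑ c, ((n c : ℤ) + 2 - 2 * v c)
        = (∑ c, (n c : ℤ)) + 2 * (Fintype.card (Quot (G.reach V')) : ℤ)
          - 2 * ∑ c, (v c : ℤ) := by
      rw [Finset.sum_sub_distrib, Finset.sum_add_distrib, Finset.sum_const,
        Finset.card_univ, ← Finset.mul_sum]
      push_cast
      ring
    have e2 : ∑ c, (n c : ℤ) = (Fintype.card G.D : ℤ) := by
      rw [hsum1]; push_cast; rfl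
    have e3 : ∑ c, (v c : ℤ) = (G.nVert V' : ℤ) := by
      rw [hVert', hsum2]; push_cast; rfl
    rw [e1, e2, e3, hkQ, hrank, ← hED]
    rw [PMultigraph.betti]
    push_cast
    ring
  -- the two finsets
  set s1 : Finset (Quot (G.reach V')) :=
    Finset.univ.filter (fun c => ∃ x ∈ G.compSet V' c, ∀ y, V.r y x → y = x) with hs1
  set s2 : Finset (Quot (G.reach V')) :=
    Finset.univ.filter (fun c => G.Malign V V' c ∧ c ∉ s1) with hs2
  -- s2 bound
  have hs2term : ∀ c ∈ s2, (2 : ℤ) ≤ (n c : ℤ) + 2 - 2 * v c := by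
    intro c hc
    rw [hs2, Finset.mem_filter] at hc
    obtain ⟨-, hmal, hns1⟩ := hc
    rcases hmal with hmal | hmal
    · have hmem : c ∈ s1 := by
        rw [hs1, Finset.mem_filter]
        exact ⟨Finset.mem_univ _, hmal⟩
      exact absurd hmem hns1
    · have hvn : v c ≤ n c / 2 := hmal
      obtain ⟨m, hm⟩ := heven c
      have : 2 * v c ≤ n c := by omega
      push_cast
      omega
  have hcard2 : (s2.card : ℤ) ≤ G.betti V - r := by
    have h1 : ∑ c ∈ s2, (2 : ℤ) ≤ ∑ c ∈ s2, ((n c : ℤ) + 2 - 2 * v c) :=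
      Finset.sum_le_sum hs2term
    have h2 : ∑ c ∈ s2, ((n c : ℤ) + 2 - 2 * v c)
        ≤ ∑ c, ((n c : ℤ) + 2 - 2 * v c) :=
      Finset.sum_le_sum_of_subset_of_nonneg (Finset.subset_univ s2)
        (fun c _ _ => hnonneg c)
    have h3 := h1.trans h2
    rw [htotal, Finset.sum_const] at h3
    simp only [nsmul_eq_mul] at h3
    linarith
  -- s1 bound
  have hcard1 : s1.card ≤ G.nLeaves V := by
    have hex : ∀ c : {c // c ∈ s1}, ∃ x, x ∈ G.compSet V' c.1 ∧ ∀ y, V.r y x → y = x := by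
      rintro ⟨c, hc⟩
      rw [hs1, Finset.mem_filter] at hc
      obtain ⟨-, x, hx1, hx2⟩ := hc
      exact ⟨x, hx1, hx2⟩
    choose w hw1 hw2 using hex
    set g : {c // c ∈ s1} →
        {vq : Quotient V // ∀ p q : G.D, Quotient.mk V p = vq → Quotient.mk V q = vq → p = q} :=
      fun c => ⟨Quotient.mk V (w c), by
        intro p q hp hq
        rw [hw2 c p (Quotient.exact hp), hw2 c q (Quotient.exact hq)]⟩ with hg
    have hginj : Function.Injective g := by
      rintro c c' h
      rw [hg, Subtype.mk.injEq] at h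
      have hw : w c = w c' := hw2 c' (w c) (Quotient.exact h)
      have h1 : Quot.mk (G.reach V') (w c) = c.1 := hw1 c
      have h2 : Quot.mk (G.reach V') (w c') = c'.1 := hw1 c'
      apply Subtype.ext
      rw [← h1, ← h2, hw]
    calc s1.card = Nat.card {c // c ∈ s1} := by
          rw [Nat.card_eq_fintype_card, Fintype.card_coe]
      _ ≤ _ := Nat.card_le_card_of_injective g hginj
  -- malign count
  have hMle : Nat.card {c : Quot (G.reach V') // G.Malign V V' c} ≤ s1.card + s2.card := by
    have hsub : {c : Quot (G.reach V') | G.Malign V V' c} ⊆ (↑(s1 ∪ s2) : Set _) := by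
      intro c hc
      rw [Finset.coe_union, Set.mem_union]
      by_cases h1 : c ∈ s1
      · exact Or.inl h1
      · exact Or.inr (by
          rw [Finset.mem_coe, hs2, Finset.mem_filter]
          exact ⟨Finset.mem_univ _, hc, h1⟩)
    calc Nat.card {c : Quot (G.reach V') // G.Malign V V' c}
        = {c : Quot (G.reach V') | G.Malign V V' c}.ncard :=
          (Nat.card_coe_set_eq _).symm ▸ rfl
      _ ≤ (↑(s1 ∪ s2) : Set _).ncard := Set.ncard_le_ncard hsub (Set.toFinite _)
      _ = (s1 ∪ s2).card := Set.ncard_coe_finset _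
      _ ≤ s1.card + s2.card := Finset.card_union_le _ _
  have : (Nat.card {c : Quot (G.reach V') // G.Malign V V' c} : ℤ)
      ≤ (s1.card : ℤ) + s2.card := by exact_mod_cast hMle
  have hc1' : (s1.card : ℤ) ≤ (G.nLeaves V : ℤ) := by exact_mod_cast hcard1
  linarith
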